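/- In the example, the value function V[v_T] does not depend on T > 0 and the value function V[w_λ] does not depend on λ > 0; hence the limits lim_{T→∞} V[v_T](ω) = V[v_1](ω) and lim_{λ→0⁺} V[w_λ](ω) = V[w_1](ω) exist uniformly in ω ∈ Ω. Nevertheless V[w_1](0,0,0) = 3/4 ≠ 1/2 = V[v_1](0,0,0), so the two uniform limits do not coincide. Thus there exists a set K of feasible processes that is closed with respect to concatenation for which the conclusion of the Uniform Tauberian Theorem fails. -/

import Mathlib

open MeasureTheory Set Filter Topology

noncomputable section

/-- Concatenation `z ⋄_h z'` of two processes at time `h`: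
`(z ⋄_h z')(t) = z(t)` for `t < h` and `(z ⋄_h z')(t) = z'(t - h)` for `t ≥ h`. -/
def concat {Ω : Type*} (z z' : ℝ → Ω) (h : ℝ) : ℝ → Ω :=
  fun t => if t < h then z t else z' (t - h)

/-- The time average `v_T(z) = (1/T) ∫₀^T g(z(t)) dt`. -/
def timeAvg {Ω : Type*} (g : Ω → ℝ) (T : ℝ) (z : ℝ → Ω) : ℝ :=
  (1 / T) * ∫ t in Ioc (0 : ℝ) T, g (z t)

/-- The discounted average `w_λ(z) = λ ∫₀^∞ e^{-λ t} g(z(t)) dt`. -/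
def discAvg {Ω : Type*} (g : Ω → ℝ) (lam : ℝ) (z : ℝ → Ω) : ℝ :=
  lam * ∫ t in Ioi (0 : ℝ), Real.exp (-lam * t) * g (z t)

/-- The value function `V[J](ω) = inf { J(z) : z ∈ K, z(0) = ω }`. -/
def Val {Ω : Type*} (K : Set (ℝ → Ω)) (J : (ℝ → Ω) → ℝ) (ω : Ω) : ℝ :=
  sInf (J '' {z ∈ K | z 0 = ω})

/-- The state space `Ω = ℝ_{≥0} × ℝ_{≥0} × ℝ_{≥0}` of the example,
realized as a subset of `ℝ × ℝ × ℝ`. -/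
def Omega3 : Set (ℝ × ℝ × ℝ) := {p | 0 ≤ p.1 ∧ 0 ≤ p.2.1 ∧ 0 ≤ p.2.2}

/-- The running cost of the example: `g(x,y,r) = 0` if `x ∈ [1,2]` and `r = 0`,
and `g(x,y,r) = 1` otherwise. -/
def gex : ℝ × ℝ × ℝ → ℝ := fun p => if p.1 ∈ Icc (1 : ℝ) 2 ∧ p.2.2 = 0 then 0 else 1

/-- The process `a_ω(t) = (x, y, t + r)` for `ω = (x, y, r)`. -/
def aproc (ω : ℝ × ℝ × ℝ) : ℝ → ℝ × ℝ × ℝ := fun t => (ω.1, ω.2.1, t + ω.2.2)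

/-- The process `b_s(t) = (s t, t, 0)`. -/
def bproc (s : ℝ) : ℝ → ℝ × ℝ × ℝ := fun t => (s * t, t, 0)

/-- The set `K` of feasible processes of the example:
`K = {a_ω : ω ∈ Ω} ∪ {b_s : s ≥ 0} ∪ {b_s ⋄_τ a_{b_s(τ)} : s ≥ 0, τ > 0}`. -/
def Kex : Set (ℝ → ℝ × ℝ × ℝ) :=
  {z | ∃ ω ∈ Omega3, z = aproc ω} ∪ {z | ∃ s : ℝ, 0 ≤ s ∧ z = bproc s} ∪
    {z | ∃ s : ℝ, 0 ≤ s ∧ ∃ τ : ℝ, 0 < τ ∧ z = concat (bproc s) (aproc (bproc s τ)) τ}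

-- auxiliary lemmas

lemma gex_nonneg (p : ℝ × ℝ × ℝ) : 0 ≤ gex p := by unfold gex; split <;> norm_num

lemma gex_le_one (p : ℝ × ℝ × ℝ) : gex p ≤ 1 := by unfold gex; split <;> norm_num

lemma norm_gex_le (p : ℝ × ℝ × ℝ) : ‖gex p‖ ≤ 1 := by
  rw [Real.norm_eq_abs, abs_le]
  exact ⟨by linarith [gex_nonneg p], gex_le_one p⟩

lemma aproc_zero (ω : ℝ × ℝ × ℝ) : aproc ω 0 = ω := by simp [aproc]

lemma bproc_zero (s : ℝ) : bproc s 0 = ((0:ℝ), (0:ℝ), (0:ℝ)) := by simp [bproc]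

lemma gA {ω : ℝ × ℝ × ℝ} (hω : ω ∈ Omega3) {t : ℝ} (ht : 0 < t) : gex (aproc ω t) = 1 := by
  have hr := hω.2.2
  show (if ω.1 ∈ Icc (1:ℝ) 2 ∧ t + ω.2.2 = 0 then (0:ℝ) else 1) = 1
  rw [if_neg]
  rintro ⟨-, h⟩
  linarith

lemma mul_mem_Icc_iff {s : ℝ} (hs : 0 < s) {t : ℝ} :
    s * t ∈ Icc (1:ℝ) 2 ↔ t ∈ Icc (1/s) (2/s) := by
  rw [mem_Icc, mem_Icc, div_le_iff₀ hs, le_div_iff₀ hs]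
  constructor <;> intro h <;> constructor <;> nlinarith [h.1, h.2]

lemma gB {s : ℝ} (hs : 0 < s) (t : ℝ) :
    gex (bproc s t) = 1 - (Icc (1/s) (2/s)).indicator (fun _ => (1:ℝ)) t := by
  by_cases h : t ∈ Icc (1/s) (2/s)
  · have h1 : s * t ∈ Icc (1:ℝ) 2 := (mul_mem_Icc_iff hs).mpr h
    show (if s * t ∈ Icc (1:ℝ) 2 ∧ (0:ℝ) = 0 then (0:ℝ) else 1) = _
    rw [if_pos ⟨h1, rfl⟩, indicator_of_mem h]
    norm_num
  · have h1 : s * t ∉ Icc (1:ℝ) 2 := fun hh => h ((mul_mem_Icc_iff hs).mp hh)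
    show (if s * t ∈ Icc (1:ℝ) 2 ∧ (0:ℝ) = 0 then (0:ℝ) else 1) = _
    rw [if_neg (fun hh => h1 hh.1), indicator_of_notMem h]
    norm_num

lemma measA (ω : ℝ × ℝ × ℝ) : Measurable fun t => gex (aproc ω t) := by
  have heq : (fun t => gex (aproc ω t)) =
      fun t => if ω.1 ∈ Icc (1:ℝ) 2 ∧ t + ω.2.2 = 0 then (0:ℝ) else 1 := rfl
  rw [heq]
  refine Measurable.ite ?_ measurable_const measurable_const
  by_cases h : ω.1 ∈ Icc (1:ℝ) 2
  · have : {t : ℝ | ω.1 ∈ Icc (1:ℝ) 2 ∧ t + ω.2.2 = 0} = {-ω.2.2} := by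
      ext t
      simp only [mem_setOf_eq, mem_singleton_iff, h, true_and]
      constructor <;> intro hh <;> linarith
    rw [this]; exact measurableSet_singleton _
  · have : {t : ℝ | ω.1 ∈ Icc (1:ℝ) 2 ∧ t + ω.2.2 = 0} = ∅ := by
      ext t; simp [h]
    rw [this]; exact MeasurableSet.empty

lemma measB (s : ℝ) : Measurable fun t => gex (bproc s t) := by
  have heq : (fun t => gex (bproc s t)) =
      fun t => if s * t ∈ Icc (1:ℝ) 2 ∧ (0:ℝ) = 0 then (0:ℝ) else 1 := rfl
  rw [heq]
  refine Measurable.ite ?_ measurable_const measurable_const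
  have : {t : ℝ | s * t ∈ Icc (1:ℝ) 2 ∧ (0:ℝ) = 0} = (fun t : ℝ => s * t) ⁻¹' Icc 1 2 := by
    ext t; simp
  rw [this]
  exact (measurable_id.const_mul s) measurableSet_Icc

lemma measK {z : ℝ → ℝ × ℝ × ℝ} (hz : z ∈ Kex) : Measurable fun t => gex (z t) := by
  simp only [Kex, mem_union, mem_setOf_eq] at hz
  rcases hz with (⟨ω, hω, rfl⟩ | ⟨s, hs, rfl⟩) | ⟨s, hs, τ, hτ, rfl⟩
  · exact measA ω
  · exact measB s
  · have heq : (fun t => gex (concat (bproc s) (aproc (bproc s τ)) τ t)) =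
        fun t => if t < τ then gex (bproc s t) else gex (aproc (bproc s τ) (t - τ)) := by
      funext t; simp only [concat]; split <;> rfl
    rw [heq]
    exact Measurable.ite measurableSet_Iio (measB s)
      ((measA _).comp (measurable_id.sub measurable_const))

lemma ind_nonneg {c d t : ℝ} : 0 ≤ (Icc c d).indicator (fun _ => (1:ℝ)) t :=
  Set.indicator_nonneg (fun _ _ => zero_le_one) t

lemma ind_le_one {c d t : ℝ} : (Icc c d).indicator (fun _ => (1:ℝ)) t ≤ 1 := by
  by_cases h : t ∈ Icc c d <;> simp [h]

lemma one_sub_ind_le_one {c d t : ℝ} : 1 - (Icc c d).indicator (fun _ => (1:ℝ)) t ≤ 1 := by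
  linarith [ind_nonneg (c := c) (d := d) (t := t)]

lemma kex_lb {z : ℝ → ℝ × ℝ × ℝ} (hz : z ∈ Kex) :
    ∃ c : ℝ, 0 < c ∧ ∀ t : ℝ, 0 < t →
      1 - (Icc c (2*c)).indicator (fun _ => (1:ℝ)) t ≤ gex (z t) := by
  simp only [Kex, mem_union, mem_setOf_eq] at hz
  rcases hz with (⟨ω, hω, rfl⟩ | ⟨s, hs, rfl⟩) | ⟨s, hs, τ, hτ, rfl⟩
  · exact ⟨1, one_pos, fun t ht => by rw [gA hω ht]; exact one_sub_ind_le_one⟩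
  · rcases eq_or_lt_of_le hs with h | h
    · refine ⟨1, one_pos, fun t ht => ?_⟩
      have : gex (bproc s t) = 1 := by
        show (if s * t ∈ Icc (1:ℝ) 2 ∧ (0:ℝ) = 0 then (0:ℝ) else 1) = 1
        rw [if_neg]; rintro ⟨hh, -⟩; rw [← h] at hh; simp [mem_Icc] at hh; linarith
      rw [this]; exact one_sub_ind_le_one
    · refine ⟨1/s, by positivity, fun t ht => ?_⟩
      rw [gB h t]
      have : (2:ℝ)/s = 2*(1/s) := by ring
      rw [this]
  · rcases eq_or_lt_of_le hs with h | h
    · refine ⟨1, one_pos, fun t ht => ?_⟩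
      have : gex (concat (bproc s) (aproc (bproc s τ)) τ t) = 1 := by
        simp only [concat]
        split
        · show (if s * t ∈ Icc (1:ℝ) 2 ∧ (0:ℝ) = 0 then (0:ℝ) else 1) = 1
          rw [if_neg]; rintro ⟨hh, -⟩; rw [← h] at hh; simp [mem_Icc] at hh; linarith
        · show (if s * τ ∈ Icc (1:ℝ) 2 ∧ t - τ + 0 = 0 then (0:ℝ) else 1) = 1
          rw [if_neg]; rintro ⟨hh, -⟩; rw [← h] at hh; simp [mem_Icc] at hh; linarith
      rw [this]; exact one_sub_ind_le_one
    · refine ⟨1/s, by positivity, fun t ht => ?_⟩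
      have h2 : (2:ℝ)/s = 2*(1/s) := by ring
      by_cases htτ : t < τ
      · simp only [concat, if_pos htτ]
        rw [gB h t, h2]
      · simp only [concat, if_neg htτ]
        by_cases hcond : s * τ ∈ Icc (1:ℝ) 2 ∧ t - τ + 0 = 0
        · have hg : gex (aproc (bproc s τ) (t - τ)) = 0 := by
            show (if s * τ ∈ Icc (1:ℝ) 2 ∧ t - τ + 0 = 0 then (0:ℝ) else 1) = 0
            rw [if_pos hcond]
          have hmem : τ ∈ Icc (1/s) (2*(1/s)) := by
            have := (mul_mem_Icc_iff h).mp hcond.1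
            rwa [← h2]
          have hteq : t = τ := by have := hcond.2; linarith
          rw [hg, hteq, indicator_of_mem hmem]
          norm_num
        · have hg : gex (aproc (bproc s τ) (t - τ)) = 1 := by
            show (if s * τ ∈ Icc (1:ℝ) 2 ∧ t - τ + 0 = 0 then (0:ℝ) else 1) = 1
            rw [if_neg hcond]
          rw [hg]; exact one_sub_ind_le_one
lemma time_integral {T c d : ℝ} (hT : 0 < T) :
    ∫ t in Ioc (0:ℝ) T, (1 - (Icc c d).indicator (fun _ => (1:ℝ)) t) =
      T - (volume (Ioc 0 T ∩ Icc c d)).toReal := by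
  have h1 : IntegrableOn (fun _ : ℝ => (1:ℝ)) (Ioc (0:ℝ) T) :=
    integrableOn_const measure_Ioc_lt_top.ne
  have h2 : IntegrableOn ((Icc c d).indicator (fun _ => (1:ℝ))) (Ioc (0:ℝ) T) :=
    h1.indicator measurableSet_Icc
  rw [integral_sub h1 h2, setIntegral_indicator measurableSet_Icc, setIntegral_const,
    setIntegral_const]
  simp [Real.volume_Ioc, ENNReal.toReal_ofReal hT.le]
  rw [max_eq_left hT.le]; rfl

lemma vol_inter_le {T c : ℝ} (hT : 0 < T) (hc : 0 < c) :
    (volume (Ioc 0 T ∩ Icc c (2*c))).toReal ≤ T/2 := by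
  have key : volume (Ioc 0 T ∩ Icc c (2*c)) ≤ ENNReal.ofReal (T/2) := by
    rcases le_or_gt c (T/2) with h | h
    · refine le_trans (measure_mono inter_subset_right) ?_
      rw [Real.volume_Icc]
      exact ENNReal.ofReal_le_ofReal (by linarith)
    · have hsub : Ioc 0 T ∩ Icc c (2*c) ⊆ Icc c T := by
        rintro t ⟨h1, h2⟩; exact ⟨h2.1, h1.2⟩
      refine le_trans (measure_mono hsub) ?_
      rw [Real.volume_Icc]
      exact ENNReal.ofReal_le_ofReal (by linarith)
  exact ENNReal.toReal_le_of_le_ofReal (by positivity) key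

lemma timeAvg_ge {T : ℝ} (hT : 0 < T) {z : ℝ → ℝ × ℝ × ℝ} (hz : z ∈ Kex) :
    1/2 ≤ timeAvg gex T z := by
  obtain ⟨c, hc, hlb⟩ := kex_lb hz
  have hmeas := measK hz
  have hconst : IntegrableOn (fun _ : ℝ => (1:ℝ)) (Ioc (0:ℝ) T) :=
    integrableOn_const measure_Ioc_lt_top.ne
  have hint_f : IntegrableOn
      (fun t => 1 - (Icc c (2*c)).indicator (fun _ => (1:ℝ)) t) (Ioc (0:ℝ) T) :=
    hconst.sub (hconst.indicator measurableSet_Icc)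
  have hint_g : IntegrableOn (fun t => gex (z t)) (Ioc (0:ℝ) T) :=
    Integrable.mono' hconst hmeas.aestronglyMeasurable (ae_of_all _ fun t => norm_gex_le _)
  have hmono : ∫ t in Ioc (0:ℝ) T, (1 - (Icc c (2*c)).indicator (fun _ => (1:ℝ)) t) ≤
      ∫ t in Ioc (0:ℝ) T, gex (z t) :=
    setIntegral_mono_on hint_f hint_g measurableSet_Ioc (fun t ht => hlb t ht.1)
  rw [time_integral hT] at hmono
  have hvol := vol_inter_le hT hc
  unfold timeAvg
  calc (1:ℝ)/2 = (1/T) * (T/2) := by field_simp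
    _ ≤ (1/T) * ∫ t in Ioc (0:ℝ) T, gex (z t) := by
        refine mul_le_mul_of_nonneg_left ?_ (by positivity)
        linarith

lemma timeAvg_a {T : ℝ} (hT : 0 < T) {ω : ℝ × ℝ × ℝ} (hω : ω ∈ Omega3) :
    timeAvg gex T (aproc ω) = 1 := by
  unfold timeAvg
  rw [setIntegral_congr_fun measurableSet_Ioc
    (g := fun _ => (1:ℝ)) (fun t ht => gA hω ht.1), setIntegral_const]
  simp [Real.volume_Ioc, ENNReal.toReal_ofReal hT.le]
  field_simp
  exact max_eq_left hT.le

lemma timeAvg_opt {T : ℝ} (hT : 0 < T) : timeAvg gex T (bproc (2/T)) = 1/2 := by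
  have hs : (0:ℝ) < 2/T := by positivity
  have e1 : 1/(2/T) = T/2 := one_div_div 2 T ▸ by rw [one_div_div]
  have e2 : 2/(2/T) = T := by field_simp
  unfold timeAvg
  have hptw : ∀ t ∈ Ioc (0:ℝ) T, gex (bproc (2/T) t) =
      (fun t => 1 - (Icc (T/2) T).indicator (fun _ => (1:ℝ)) t) t := by
    intro t _; rw [gB hs t, e1, e2]
  rw [setIntegral_congr_fun measurableSet_Ioc hptw, time_integral hT]
  have hinter : Ioc 0 T ∩ Icc (T/2) T = Icc (T/2) T := by
    ext t
    constructor
    · rintro ⟨h1, h2⟩; exact h2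
    · rintro ⟨h1, h2⟩; exact ⟨⟨by linarith, h2⟩, h1, h2⟩
  rw [hinter, Real.volume_Icc, ENNReal.toReal_ofReal (by linarith)]
  field_simp
  norm_num
lemma integral_exp_Ioi {lam : ℝ} (hl : 0 < lam) :
    ∫ t in Ioi (0:ℝ), Real.exp (-lam * t) = lam⁻¹ := by
  have h := integral_comp_mul_left_Ioi (fun x => Real.exp (-x)) 0 hl
  simp only [mul_zero] at h
  have heq : (fun t : ℝ => Real.exp (-lam * t)) = fun t : ℝ => Real.exp (-(lam * t)) := by
    funext t; ring_nf
  rw [heq, h, integral_exp_neg_Ioi_zero, smul_eq_mul, mul_one]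

lemma integral_exp_Icc {lam c d : ℝ} (hl : 0 < lam) (hcd : c ≤ d) :
    ∫ t in Icc c d, Real.exp (-lam * t) =
      (Real.exp (-lam * c) - Real.exp (-lam * d)) / lam := by
  rw [integral_Icc_eq_integral_Ioc, ← intervalIntegral.integral_of_le hcd]
  rw [intervalIntegral.integral_comp_mul_left (fun y => Real.exp y) (neg_ne_zero.mpr hl.ne')]
  rw [integral_exp, smul_eq_mul]
  field_simp [hl.ne']
  ring

lemma exp_measurable {lam : ℝ} : Measurable fun t : ℝ => Real.exp (-lam * t) :=
  Real.measurable_exp.comp (measurable_id.const_mul (-lam))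

lemma disc_integral {lam c d : ℝ} (hl : 0 < lam) (hc : 0 < c) (hcd : c ≤ d) :
    ∫ t in Ioi (0:ℝ), Real.exp (-lam * t) * (1 - (Icc c d).indicator (fun _ => (1:ℝ)) t) =
      lam⁻¹ - (Real.exp (-lam * c) - Real.exp (-lam * d)) / lam := by
  have hexp : IntegrableOn (fun t : ℝ => Real.exp (-lam * t)) (Ioi (0:ℝ)) :=
    exp_neg_integrableOn_Ioi 0 hl
  have hrw : (fun t => Real.exp (-lam * t) * (1 - (Icc c d).indicator (fun _ => (1:ℝ)) t)) =
      fun t => Real.exp (-lam * t) - (Icc c d).indicator (fun t => Real.exp (-lam * t)) t := by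
    funext t
    by_cases h : t ∈ Icc c d <;> simp [h]
  rw [hrw, integral_sub hexp (hexp.indicator measurableSet_Icc),
    setIntegral_indicator measurableSet_Icc]
  have hinter : Ioi (0:ℝ) ∩ Icc c d = Icc c d :=
    inter_eq_self_of_subset_right (fun t ht => lt_of_lt_of_le hc ht.1)
  rw [hinter, integral_exp_Ioi hl, integral_exp_Icc hl hcd]

lemma discAvg_ge {lam : ℝ} (hl : 0 < lam) {z : ℝ → ℝ × ℝ × ℝ} (hz : z ∈ Kex) :
    3/4 ≤ discAvg gex lam z := by
  obtain ⟨c, hc, hlb⟩ := kex_lb hz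
  have hmeas := measK hz
  have hexp : IntegrableOn (fun t : ℝ => Real.exp (-lam * t)) (Ioi (0:ℝ)) :=
    exp_neg_integrableOn_Ioi 0 hl
  have hint_f : IntegrableOn
      (fun t => Real.exp (-lam * t) * (1 - (Icc c (2*c)).indicator (fun _ => (1:ℝ)) t))
      (Ioi (0:ℝ)) := by
    refine Integrable.mono' hexp ?_ (ae_of_all _ fun t => ?_)
    · exact (exp_measurable.mul (measurable_const.sub
        (measurable_const.indicator measurableSet_Icc))).aestronglyMeasurable
    · rw [norm_mul, Real.norm_eq_abs, Real.norm_eq_abs, abs_of_pos (Real.exp_pos _)]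
      have h1 := ind_nonneg (c := c) (d := 2*c) (t := t)
      have h2 := ind_le_one (c := c) (d := 2*c) (t := t)
      have : |1 - (Icc c (2*c)).indicator (fun _ => (1:ℝ)) t| ≤ 1 := by
        rw [abs_le]; constructor <;> linarith
      nlinarith [Real.exp_pos (-lam * t)]
  have hint_g : IntegrableOn (fun t => Real.exp (-lam * t) * gex (z t)) (Ioi (0:ℝ)) := by
    refine Integrable.mono' hexp ?_ (ae_of_all _ fun t => ?_)
    · exact (exp_measurable.mul hmeas).aestronglyMeasurable
    · rw [norm_mul, Real.norm_eq_abs, abs_of_pos (Real.exp_pos _)]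
      nlinarith [Real.exp_pos (-lam * t), norm_gex_le (z t), abs_nonneg (gex (z t))]
  have hmono : ∫ t in Ioi (0:ℝ),
        Real.exp (-lam * t) * (1 - (Icc c (2*c)).indicator (fun _ => (1:ℝ)) t) ≤
      ∫ t in Ioi (0:ℝ), Real.exp (-lam * t) * gex (z t) :=
    setIntegral_mono_on hint_f hint_g measurableSet_Ioi
      (fun t ht => mul_le_mul_of_nonneg_left (hlb t ht) (Real.exp_pos _).le)
  rw [disc_integral hl hc (by linarith)] at hmono
  set u := Real.exp (-lam * c) with hu
  have hv : Real.exp (-lam * (2*c)) = u * u := by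
    rw [hu, ← Real.exp_add]; ring_nf
  rw [hv] at hmono
  have hupos : 0 < u := Real.exp_pos _
  unfold discAvg
  have hval : (3:ℝ)/4 ≤ lam * (lam⁻¹ - (u - u * u) / lam) := by
    rw [mul_sub, mul_inv_cancel₀ hl.ne', mul_div_cancel₀ _ hl.ne']
    nlinarith [sq_nonneg (u - 1/2)]
  calc (3:ℝ)/4 ≤ lam * (lam⁻¹ - (u - u * u) / lam) := hval
    _ ≤ lam * ∫ t in Ioi (0:ℝ), Real.exp (-lam * t) * gex (z t) :=
        mul_le_mul_of_nonneg_left hmono hl.le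

lemma discAvg_a {lam : ℝ} (hl : 0 < lam) {ω : ℝ × ℝ × ℝ} (hω : ω ∈ Omega3) :
    discAvg gex lam (aproc ω) = 1 := by
  unfold discAvg
  rw [setIntegral_congr_fun measurableSet_Ioi
    (g := fun t => Real.exp (-lam * t)) (fun t ht => by rw [gA hω ht, mul_one])]
  rw [integral_exp_Ioi hl, mul_inv_cancel₀ hl.ne']

lemma discAvg_opt {lam : ℝ} (hl : 0 < lam) :
    discAvg gex lam (bproc (lam / Real.log 2)) = 3/4 := by
  have hlog : 0 < Real.log 2 := Real.log_pos one_lt_two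
  set c := Real.log 2 / lam with hcdef
  have hc : 0 < c := by positivity
  have hs : 0 < lam / Real.log 2 := by positivity
  have e1 : 1/(lam / Real.log 2) = c := by rw [hcdef, one_div_div]
  have e2 : 2/(lam / Real.log 2) = 2*c := by rw [hcdef]; field_simp
  unfold discAvg
  have hptw : ∀ t ∈ Ioi (0:ℝ), Real.exp (-lam * t) * gex (bproc (lam / Real.log 2) t) =
      (fun t => Real.exp (-lam * t) * (1 - (Icc c (2*c)).indicator (fun _ => (1:ℝ)) t)) t := by
    intro t _; rw [gB hs t, e1, e2]
  rw [setIntegral_congr_fun measurableSet_Ioi hptw, disc_integral hl hc (by linarith)]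
  have hu : Real.exp (-lam * c) = 1/2 := by
    rw [hcdef, show -lam * (Real.log 2 / lam) = -Real.log 2 by field_simp]
    rw [Real.exp_neg, Real.exp_log two_pos]; norm_num
  have hv : Real.exp (-lam * (2*c)) = 1/4 := by
    rw [show -lam * (2*c) = (-lam * c) + (-lam * c) by ring, Real.exp_add, hu]; norm_num
  rw [hu, hv]
  field_simp
  ring
lemma aproc_mem {ω : ℝ × ℝ × ℝ} (hω : ω ∈ Omega3) : aproc ω ∈ Kex := by
  simp only [Kex, mem_union, mem_setOf_eq]
  exact Or.inl (Or.inl ⟨ω, hω, rfl⟩)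

lemma bproc_mem {s : ℝ} (hs : 0 ≤ s) : bproc s ∈ Kex := by
  simp only [Kex, mem_union, mem_setOf_eq]
  exact Or.inl (Or.inr ⟨s, hs, rfl⟩)

lemma start_eq {z : ℝ → ℝ × ℝ × ℝ} {ω : ℝ × ℝ × ℝ} (hz : z ∈ Kex) (h0 : z 0 = ω)
    (hne : ω ≠ ((0:ℝ),(0:ℝ),(0:ℝ))) : z = aproc ω := by
  simp only [Kex, mem_union, mem_setOf_eq] at hz
  rcases hz with (⟨ω', hω', rfl⟩ | ⟨s, hs, rfl⟩) | ⟨s, hs, τ, hτ, rfl⟩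
  · rw [← h0, aproc_zero]
  · exfalso; apply hne; rw [← h0, bproc_zero]
  · exfalso; apply hne; rw [← h0]; simp [concat, hτ, bproc]

lemma setGamma_ne {ω : ℝ × ℝ × ℝ} (hω : ω ∈ Omega3) (hne : ω ≠ ((0:ℝ),(0:ℝ),(0:ℝ))) :
    {z ∈ Kex | z 0 = ω} = {aproc ω} := by
  ext z
  constructor
  · rintro ⟨hzK, hz0⟩; exact start_eq hzK hz0 hne
  · rintro rfl; exact ⟨aproc_mem hω, aproc_zero ω⟩

lemma val_time_ne {T : ℝ} {ω : ℝ × ℝ × ℝ} (hT : 0 < T) (hω : ω ∈ Omega3)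
    (hne : ω ≠ ((0:ℝ),(0:ℝ),(0:ℝ))) : Val Kex (timeAvg gex T) ω = 1 := by
  unfold Val
  rw [setGamma_ne hω hne, image_singleton, csInf_singleton, timeAvg_a hT hω]

lemma val_disc_ne {lam : ℝ} {ω : ℝ × ℝ × ℝ} (hl : 0 < lam) (hω : ω ∈ Omega3)
    (hne : ω ≠ ((0:ℝ),(0:ℝ),(0:ℝ))) : Val Kex (discAvg gex lam) ω = 1 := by
  unfold Val
  rw [setGamma_ne hω hne, image_singleton, csInf_singleton, discAvg_a hl hω]

lemma val_time_zero {T : ℝ} (hT : 0 < T) :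
    Val Kex (timeAvg gex T) ((0:ℝ),(0:ℝ),(0:ℝ)) = 1/2 := by
  unfold Val
  have hmem : timeAvg gex T (bproc (2/T)) ∈
      timeAvg gex T '' {z ∈ Kex | z 0 = ((0:ℝ),(0:ℝ),(0:ℝ))} :=
    mem_image_of_mem _ ⟨bproc_mem (by positivity), bproc_zero _⟩
  have hlb : ∀ x ∈ timeAvg gex T '' {z ∈ Kex | z 0 = ((0:ℝ),(0:ℝ),(0:ℝ))}, 1/2 ≤ x := by
    rintro x ⟨z, ⟨hzK, -⟩, rfl⟩
    exact timeAvg_ge hT hzK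
  refine le_antisymm ?_ (le_csInf ⟨_, hmem⟩ hlb)
  have := csInf_le ⟨1/2, hlb⟩ hmem
  rwa [timeAvg_opt hT] at this

lemma val_disc_zero {lam : ℝ} (hl : 0 < lam) :
    Val Kex (discAvg gex lam) ((0:ℝ),(0:ℝ),(0:ℝ)) = 3/4 := by
  unfold Val
  have hsmem : (0:ℝ) ≤ lam / Real.log 2 := by
    positivity
  have hmem : discAvg gex lam (bproc (lam / Real.log 2)) ∈
      discAvg gex lam '' {z ∈ Kex | z 0 = ((0:ℝ),(0:ℝ),(0:ℝ))} :=
    mem_image_of_mem _ ⟨bproc_mem hsmem, bproc_zero _⟩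
  have hlb : ∀ x ∈ discAvg gex lam '' {z ∈ Kex | z 0 = ((0:ℝ),(0:ℝ),(0:ℝ))}, 3/4 ≤ x := by
    rintro x ⟨z, ⟨hzK, -⟩, rfl⟩
    exact discAvg_ge hl hzK
  refine le_antisymm ?_ (le_csInf ⟨_, hmem⟩ hlb)
  have := csInf_le ⟨3/4, hlb⟩ hmem
  rwa [discAvg_opt hl] at this

lemma kex_zero_or_a {z : ℝ → ℝ × ℝ × ℝ} (hz : z ∈ Kex) :
    (∃ ω ∈ Omega3, z = aproc ω) ∨ z 0 = ((0:ℝ),(0:ℝ),(0:ℝ)) := by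
  simp only [Kex, mem_union, mem_setOf_eq] at hz
  rcases hz with (⟨ω, hω, rfl⟩ | ⟨s, hs, rfl⟩) | ⟨s, hs, τ, hτ, rfl⟩
  · exact Or.inl ⟨ω, hω, rfl⟩
  · exact Or.inr (bproc_zero s)
  · right; simp [concat, hτ, bproc]

lemma closed_concat {z z' : ℝ → ℝ × ℝ × ℝ} (hz : z ∈ Kex) (hz' : z' ∈ Kex) {τ : ℝ}
    (hτ : 0 < τ) (heq : z τ = z' 0) : concat z z' τ ∈ Kex := by
  rcases kex_zero_or_a hz' with ⟨ω', hω', rfl⟩ | h0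
  · have hω'' : ω' = z τ := by rw [heq, aproc_zero]
    subst hω''
    simp only [Kex, mem_union, mem_setOf_eq] at hz ⊢
    rcases hz with (⟨ω, hω, rfl⟩ | ⟨s, hs, rfl⟩) | ⟨s, hs, σ, hσ, rfl⟩
    · -- z = aproc ω ; concatenation is aproc ω again
      refine Or.inl (Or.inl ⟨ω, hω, ?_⟩)
      funext t
      simp only [concat]
      by_cases ht : t < τ
      · rw [if_pos ht]
      · rw [if_neg ht]
        show (ω.1, ω.2.1, (t - τ) + (τ + ω.2.2)) = (ω.1, ω.2.1, t + ω.2.2)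
        rw [show (t - τ) + (τ + ω.2.2) = t + ω.2.2 by ring]
    · -- z = bproc s : concatenation is in the third family
      exact Or.inr ⟨s, hs, τ, hτ, rfl⟩
    · -- z = concat (bproc s) (aproc (bproc s σ)) σ
      rcases lt_or_ge τ σ with h | h
      · -- τ < σ : the concatenation equals concat (bproc s) (aproc (bproc s τ)) τ
        refine Or.inr ⟨s, hs, τ, hτ, ?_⟩
        funext t
        simp only [concat]
        rw [if_pos h]
        by_cases ht : t < τ
        · rw [if_pos ht, if_pos ht, if_pos (ht.trans h)]
        · rw [if_neg ht, if_neg ht]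
      · -- σ ≤ τ : the concatenation equals z itself
        refine Or.inr ⟨s, hs, σ, hσ, ?_⟩
        have hτσ : ¬ τ < σ := not_lt.mpr h
        funext t
        simp only [concat]
        rw [if_neg hτσ]
        by_cases ht : t < τ
        · rw [if_pos ht]
        · have ht' : ¬ t < σ := fun hh => ht (hh.trans_le h)
          rw [if_neg ht, if_neg ht']
          show (s * σ, σ, (t - τ) + ((τ - σ) + 0)) = (s * σ, σ, (t - σ) + 0)
          rw [show (t - τ) + ((τ - σ) + 0) = (t - σ) + 0 by ring]
  · -- z' starts at the origin : impossible since z τ ≠ origin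
    exfalso
    rw [h0] at heq
    simp only [Kex, mem_union, mem_setOf_eq] at hz
    rcases hz with (⟨ω, hω, rfl⟩ | ⟨s, hs, rfl⟩) | ⟨s, hs, σ, hσ, rfl⟩
    · have h3 := congrArg (fun p : ℝ × ℝ × ℝ => p.2.2) heq
      simp only [aproc] at h3
      have hr := hω.2.2
      linarith
    · have h2 := congrArg (fun p : ℝ × ℝ × ℝ => p.2.1) heq
      simp only [bproc] at h2
      linarith
    · by_cases hτσ : τ < σ
      · have h2 := congrArg (fun p : ℝ × ℝ × ℝ => p.2.1) heq
        simp only [concat, if_pos hτσ, bproc] at h2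
        linarith
      · have h2 := congrArg (fun p : ℝ × ℝ × ℝ => p.2.1) heq
        simp only [concat, if_neg hτσ, aproc, bproc] at h2
        linarith
/-- In the example, `V[v_T]` does not depend on `T > 0`, `V[w_λ]` does not depend
on `λ > 0`, hence `lim_{T→∞} V[v_T] = V[v_1]` and `lim_{λ→0⁺} V[w_λ] = V[w_1]`
exist uniformly on `Ω`; nevertheless `V[w_1](0,0,0) = 3/4 ≠ 1/2 = V[v_1](0,0,0)`,
so the two uniform limits do not coincide, even though `K` is closed with respect
to concatenation: the conclusion of the Uniform Tauberian Theorem fails. -/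
theorem tauberian_fails :
    (∀ T T' : ℝ, 0 < T → 0 < T' → ∀ ω ∈ Omega3,
      Val Kex (timeAvg gex T) ω = Val Kex (timeAvg gex T') ω) ∧
    (∀ lam lam' : ℝ, 0 < lam → 0 < lam' → ∀ ω ∈ Omega3,
      Val Kex (discAvg gex lam) ω = Val Kex (discAvg gex lam') ω) ∧
    TendstoUniformlyOn (fun T ω => Val Kex (timeAvg gex T) ω)
      (Val Kex (timeAvg gex 1)) atTop Omega3 ∧
    TendstoUniformlyOn (fun lam ω => Val Kex (discAvg gex lam) ω)
      (Val Kex (discAvg gex 1)) (𝓝[>] (0 : ℝ)) Omega3 ∧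
    Val Kex (discAvg gex 1) (0, 0, 0) = 3 / 4 ∧
    Val Kex (timeAvg gex 1) (0, 0, 0) = 1 / 2 ∧
    Val Kex (discAvg gex 1) (0, 0, 0) ≠ Val Kex (timeAvg gex 1) (0, 0, 0) ∧
    (∀ z ∈ Kex, ∀ z' ∈ Kex, ∀ τ : ℝ, 0 < τ → z τ = z' 0 →
      concat z z' τ ∈ Kex) := by
  have hTval : ∀ T : ℝ, 0 < T → ∀ ω ∈ Omega3, Val Kex (timeAvg gex T) ω =
      if ω = ((0:ℝ),(0:ℝ),(0:ℝ)) then 1/2 else 1 := by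
    intro T hT ω hω
    by_cases h : ω = ((0:ℝ),(0:ℝ),(0:ℝ))
    · rw [if_pos h, h]; exact val_time_zero hT
    · rw [if_neg h]; exact val_time_ne hT hω h
  have hLval : ∀ lam : ℝ, 0 < lam → ∀ ω ∈ Omega3, Val Kex (discAvg gex lam) ω =
      if ω = ((0:ℝ),(0:ℝ),(0:ℝ)) then 3/4 else 1 := by
    intro lam hl ω hω
    by_cases h : ω = ((0:ℝ),(0:ℝ),(0:ℝ))
    · rw [if_pos h, h]; exact val_disc_zero hl
    · rw [if_neg h]; exact val_disc_ne hl hω h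
  refine ⟨?_, ?_, ?_, ?_, ?_, ?_, ?_, ?_⟩
  · intro T T' hT hT' ω hω
    rw [hTval T hT ω hω, hTval T' hT' ω hω]
  · intro lam lam' hl hl' ω hω
    rw [hLval lam hl ω hω, hLval lam' hl' ω hω]
  · rw [Metric.tendstoUniformlyOn_iff]
    intro ε hε
    filter_upwards [eventually_gt_atTop (0:ℝ)] with T hT ω hω
    rw [hTval T hT ω hω, hTval 1 one_pos ω hω]
    simpa using hε
  · rw [Metric.tendstoUniformlyOn_iff]
    intro ε hε
    filter_upwards [self_mem_nhdsWithin] with lam hlam ω hω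
    rw [hLval lam hlam ω hω, hLval 1 one_pos ω hω]
    simpa using hε
  · exact val_disc_zero one_pos
  · exact val_time_zero one_pos
  · rw [val_disc_zero one_pos, val_time_zero one_pos]; norm_num
  · intro z hz z' hz' τ hτ heq
    exact closed_concat hz hz' hτ heq
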